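/- Let (a_t) be nonnegative reals satisfying a_{t+1} ≤ (1 - 1/t) a_t + (D√C) t^{-3/2} + (L D² / 2) t^{-2} for t = 1,...,T, with D, C, L ≥ 0. Then a_{T+1} ≤ 2√C D / √T + L D² (1 + ln T)/(2T). -/

import Mathlib

lemma sum_rsqrt_le (T : ℕ) :
    ∑ t ∈ Finset.Icc 1 T, ((t:ℝ))^(-(1/2 : ℝ)) ≤ 2 * Real.sqrt T := by
  induction T with
  | zero => simp
  | succ n ih =>
    rw [Finset.sum_Icc_succ_top (by omega : 1 ≤ n + 1)]
    have h1 : ((n+1:ℕ):ℝ)^(-(1/2 : ℝ)) = (Real.sqrt (n+1))⁻¹ := by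
      rw [Real.rpow_neg (by positivity), Real.sqrt_eq_rpow]
      norm_num
    have hs : Real.sqrt (n:ℝ) ^ 2 = (n:ℝ) := Real.sq_sqrt (by positivity)
    have hu : Real.sqrt ((n:ℝ)+1) ^ 2 = (n:ℝ)+1 := Real.sq_sqrt (by positivity)
    have hs0 : 0 ≤ Real.sqrt (n:ℝ) := Real.sqrt_nonneg _
    have hu0 : 0 < Real.sqrt ((n:ℝ)+1) := Real.sqrt_pos.mpr (by positivity)
    have key : (Real.sqrt ((n:ℝ)+1))⁻¹ ≤ 2 * Real.sqrt ((n:ℝ)+1) - 2 * Real.sqrt (n:ℝ) := by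
      rw [inv_le_iff_one_le_mul₀ hu0]
      nlinarith [sq_nonneg (Real.sqrt ((n:ℝ)+1) - Real.sqrt (n:ℝ))]
    have : ((n+1:ℕ):ℝ) = (n:ℝ)+1 := by push_cast; ring
    rw [h1, this]
    linarith
lemma sum_inv_le (T : ℕ) (hT : 1 ≤ T) :
    ∑ t ∈ Finset.Icc 1 T, ((t:ℝ))⁻¹ ≤ 1 + Real.log T := by
  induction T, hT using Nat.le_induction with
  | base => simp
  | succ n hn ih =>
    rw [Finset.sum_Icc_succ_top (by omega : 1 ≤ n + 1)]
    have hn0 : (0:ℝ) < n := by positivity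
    have hlog : Real.log ((n:ℝ)/((n:ℝ)+1)) ≤ (n:ℝ)/((n:ℝ)+1) - 1 :=
      Real.log_le_sub_one_of_pos (by positivity)
    rw [Real.log_div (by positivity) (by positivity)] at hlog
    have h2 : ((n+1:ℕ):ℝ)⁻¹ ≤ Real.log ((n:ℝ)+1) - Real.log n := by
      push_cast
      have : (n:ℝ)/((n:ℝ)+1) - 1 = -((n:ℝ)+1)⁻¹ := by field_simp; ring
      rw [this] at hlog
      linarith
    have : Real.log ((n+1:ℕ):ℝ) = Real.log ((n:ℝ)+1) := by push_cast; ring_nf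
    rw [this]
    linarith

theorem stmt_7 (T : ℕ) (hT : 1 ≤ T) (a : ℕ → ℝ) (D C L : ℝ)
    (hD : 0 ≤ D) (hC : 0 ≤ C) (hL : 0 ≤ L)
    (ha : ∀ t, 0 ≤ a t)
    (hrec : ∀ t ∈ Finset.Icc 1 T,
      a (t + 1) ≤ (1 - 1 / (t:ℝ)) * a t + (D * Real.sqrt C) * (t:ℝ)^(-(3/2 : ℝ))
        + (L * D^2 / 2) * (t:ℝ)^(-(2:ℝ))) :
    a (T + 1) ≤ 2 * Real.sqrt C * D / Real.sqrt T + L * D^2 * (1 + Real.log T) / (2 * T) := by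
  set c1 : ℝ := D * Real.sqrt C with hc1def
  set c2 : ℝ := L * D^2 / 2 with hc2def
  have hc1 : 0 ≤ c1 := by positivity
  have hc2 : 0 ≤ c2 := by positivity
  -- main induction: T * a (T+1) ≤ c1 * Σ t^{-1/2} + c2 * Σ t⁻¹
  have main : ∀ S : ℕ, 1 ≤ S → (∀ t ∈ Finset.Icc 1 S,
      a (t + 1) ≤ (1 - 1 / (t:ℝ)) * a t + c1 * (t:ℝ)^(-(3/2 : ℝ))
        + c2 * (t:ℝ)^(-(2:ℝ))) →
      (S:ℝ) * a (S+1) ≤ c1 * ∑ t ∈ Finset.Icc 1 S, ((t:ℝ))^(-(1/2 : ℝ))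
        + c2 * ∑ t ∈ Finset.Icc 1 S, ((t:ℝ))⁻¹ := by
    intro S hS
    induction S, hS using Nat.le_induction with
    | base =>
      intro hr
      have := hr 1 (by simp)
      norm_num at this ⊢
      linarith
    | succ n hn ih =>
      intro hr
      have ihn := ih (fun t ht => hr t (Finset.mem_Icc.mpr ⟨(Finset.mem_Icc.mp ht).1, by
        have := (Finset.mem_Icc.mp ht).2; omega⟩))
      have hrn := hr (n+1) (Finset.mem_Icc.mpr ⟨by omega, le_refl _⟩)
      have hx0 : (0:ℝ) < ((n+1:ℕ):ℝ) := by positivity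
      -- multiply recursion at t = n+1 by (n+1)
      have hmul : ((n+1:ℕ):ℝ) * a (n+2) ≤ (n:ℝ) * a (n+1)
          + c1 * ((n+1:ℕ):ℝ)^(-(1/2 : ℝ)) + c2 * ((n+1:ℕ):ℝ)⁻¹ := by
        have e1 : ((n+1:ℕ):ℝ) * ((n+1:ℕ):ℝ)^(-(3/2 : ℝ)) = ((n+1:ℕ):ℝ)^(-(1/2 : ℝ)) := by
          nth_rewrite 1 [← Real.rpow_one ((n+1:ℕ):ℝ)]
          rw [← Real.rpow_add hx0]; norm_num
        have e2 : ((n+1:ℕ):ℝ) * ((n+1:ℕ):ℝ)^(-(2 : ℝ)) = ((n+1:ℕ):ℝ)⁻¹ := by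
          nth_rewrite 1 [← Real.rpow_one ((n+1:ℕ):ℝ)]
          rw [← Real.rpow_add hx0]; norm_num
          rw [Real.rpow_neg_one]
        have e3 : ((n+1:ℕ):ℝ) * (1 - 1 / ((n+1:ℕ):ℝ)) = (n:ℝ) := by
          field_simp; push_cast; ring
        calc ((n+1:ℕ):ℝ) * a (n+2)
            ≤ ((n+1:ℕ):ℝ) * ((1 - 1 / ((n+1:ℕ):ℝ)) * a (n+1)
              + c1 * ((n+1:ℕ):ℝ)^(-(3/2 : ℝ)) + c2 * ((n+1:ℕ):ℝ)^(-(2:ℝ))) := by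
              apply mul_le_mul_of_nonneg_left _ (le_of_lt hx0)
              exact_mod_cast hrn
          _ = (n:ℝ) * a (n+1) + c1 * (((n+1:ℕ):ℝ) * ((n+1:ℕ):ℝ)^(-(3/2 : ℝ)))
              + c2 * (((n+1:ℕ):ℝ) * ((n+1:ℕ):ℝ)^(-(2:ℝ))) := by
              rw [mul_add, mul_add, ← mul_assoc, e3]; ring
          _ = (n:ℝ) * a (n+1) + c1 * ((n+1:ℕ):ℝ)^(-(1/2 : ℝ)) + c2 * ((n+1:ℕ):ℝ)⁻¹ := by
              rw [e1, e2]
      rw [Finset.sum_Icc_succ_top (by omega : 1 ≤ n + 1),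
          Finset.sum_Icc_succ_top (by omega : 1 ≤ n + 1)]
      have : ((n+1:ℕ):ℝ) * a (n+1+1) ≤ (c1 * ∑ t ∈ Finset.Icc 1 n, ((t:ℝ))^(-(1/2 : ℝ))
          + c2 * ∑ t ∈ Finset.Icc 1 n, ((t:ℝ))⁻¹)
          + c1 * ((n+1:ℕ):ℝ)^(-(1/2 : ℝ)) + c2 * ((n+1:ℕ):ℝ)⁻¹ := by
        have : (n+2) = (n+1+1) := by ring
        rw [← this]
        linarith
      linarith
  have key := main T hT (by
    intro t ht
    exact hrec t ht)
  have h1 := sum_rsqrt_le T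
  have h2 := sum_inv_le T hT
  have hT0 : (0:ℝ) < (T:ℝ) := by positivity
  have hbound : (T:ℝ) * a (T+1) ≤ c1 * (2 * Real.sqrt T) + c2 * (1 + Real.log T) := by
    have s1 : c1 * ∑ t ∈ Finset.Icc 1 T, ((t:ℝ))^(-(1/2 : ℝ)) ≤ c1 * (2 * Real.sqrt T) :=
      mul_le_mul_of_nonneg_left h1 hc1
    have s2 : c2 * ∑ t ∈ Finset.Icc 1 T, ((t:ℝ))⁻¹ ≤ c2 * (1 + Real.log T) :=
      mul_le_mul_of_nonneg_left h2 hc2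
    linarith
  have hst : Real.sqrt T * Real.sqrt T = (T:ℝ) := Real.mul_self_sqrt (le_of_lt hT0)
  have hst0 : (0:ℝ) < Real.sqrt T := Real.sqrt_pos.mpr hT0
  have hgoal : a (T+1) ≤ (c1 * (2 * Real.sqrt T) + c2 * (1 + Real.log T)) / (T:ℝ) :=
    (le_div_iff₀ hT0).mpr (by linarith [hbound])
  have heq : (c1 * (2 * Real.sqrt T) + c2 * (1 + Real.log T)) / (T:ℝ)
      = 2 * Real.sqrt C * D / Real.sqrt T + L * D^2 * (1 + Real.log T) / (2 * T) := by
    rw [add_div]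
    have eA : c1 * (2 * Real.sqrt T) / (T:ℝ) = 2 * Real.sqrt C * D / Real.sqrt T := by
      rw [hc1def, ← hst]; field_simp; rw [Real.sqrt_sq hst0.le]
    have eB : c2 * (1 + Real.log T) / (T:ℝ) = L * D^2 * (1 + Real.log T) / (2 * T) := by
      rw [hc2def]; field_simp
    rw [eA, eB]
  linarith [hgoal, heq.le, heq.ge]
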